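/- Let Ω be a skew-symmetric bilinear form on a finite-dimensional vector space V, let G act on V by a linear map Φ preserving Ω (Φ*Ω = Ω), let H ⊆ V be a Φ-invariant subspace (Φ(H) = H). Define D := {(v,α) ∈ V × V* : v ∈ H, α - Ω^♭(v) ∈ H°}. Then D is invariant under the map (v,α) ↦ (Φv, (Φ^{-1})*α), where (Φ^{-1})*α := α ∘ Φ^{-1}. -/
import Mathlib


/-- Invariance of the constrained Dirac structure under a symmetry preserving
the two-form and the constraint subspace. -/
theorem stmt_15 {V : Type*} [AddCommGroup V] [Module ℝ V] [FiniteDimensional ℝ V]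
    (Ω : V →ₗ[ℝ] V →ₗ[ℝ] ℝ) (hskew : ∀ v w : V, Ω v w = - Ω w v)
    (Φ : V ≃ₗ[ℝ] V) (hΦΩ : ∀ v w : V, Ω (Φ v) (Φ w) = Ω v w)
    (H : Submodule ℝ V) (hΦH : Submodule.map (Φ : V →ₗ[ℝ] V) H = H) :
    ∀ p : V × Module.Dual ℝ V,
      (p.1 ∈ H ∧ p.2 - Ω p.1 ∈ H.dualAnnihilator) →
      (Φ p.1 ∈ H ∧ (p.2.comp (Φ.symm : V →ₗ[ℝ] V)) - Ω (Φ p.1) ∈ H.dualAnnihilator) := by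
  rintro ⟨v, α⟩ ⟨hv, hann⟩
  rw [Submodule.mem_dualAnnihilator] at hann ⊢
  constructor
  · rw [← hΦH]; exact ⟨v, hv, rfl⟩
  · intro w hw
    have hw' : Φ.symm w ∈ H := by
      rw [← hΦH] at hw
      obtain ⟨u, hu, rfl⟩ := hw
      simpa using hu
    have key : Ω (Φ v) w = Ω v (Φ.symm w) := by
      conv_lhs => rw [show w = Φ (Φ.symm w) by simp]
      exact hΦΩ v (Φ.symm w)
    have := hann (Φ.symm w) hw'
    simp only [LinearMap.sub_apply, LinearMap.comp_apply, LinearEquiv.coe_coe] at this ⊢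
    rw [key]
    exact this
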